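/- Let r ≥ 2 and c be integers with the same parity, 0 < c ≤ r-2, and write c = r - 2k. The set of negative integers x such that d_pc(O,(x,x+c)) = r equals ([0,r-k-1] ∩ ℤ) - c(k+1) - (k+1)k/2 if k is odd, and ([k-r,-1] ∩ ℤ) - ck - k(k-1)/2 if k is even. -/

import Mathlib

def Lp : ℤ × ℤ → ℤ × ℤ := fun p => (-p.1 + 2*p.2 + 1, p.2)
def Lpp : ℤ × ℤ → ℤ × ℤ := fun p => (p.1, 2*p.1 - p.2 + 1)
def Mr : ℤ × ℤ → ℤ × ℤ := fun p => (p.1 + 1, p.2)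
def Ml : ℤ × ℤ → ℤ × ℤ := fun p => (p.1 - 1, p.2)
def Mu : ℤ × ℤ → ℤ × ℤ := fun p => (p.1, p.2 + 1)
def Md : ℤ × ℤ → ℤ × ℤ := fun p => (p.1, p.2 - 1)

def ops : Set ((ℤ × ℤ) → (ℤ × ℤ)) := {Lp, Lpp, Mr, Ml, Mu, Md}

/-- The parabolic-taxicab distance: minimal number of operators from `ops`
needed to map `P` to `Q`. -/
noncomputable def dpc (P Q : ℤ × ℤ) : ℕ :=
  sInf {n | ∃ l : List ((ℤ × ℤ) → (ℤ × ℤ)), l.length = n ∧ (∀ f ∈ l, f ∈ ops) ∧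
    l.foldr (fun f p => f p) P = Q}

lemma tnat_exists (f : ℤ) : ∃ t : ℕ, f ≤ (t : ℤ) * ((t : ℤ) + 1) := by
  refine ⟨f.toNat, ?_⟩
  have h1 : f ≤ (f.toNat : ℤ) := Int.self_le_toNat f
  have h2 : (0:ℤ) ≤ (f.toNat : ℤ) := Int.natCast_nonneg _
  nlinarith

def tnat (f : ℤ) : ℕ := Nat.find (tnat_exists f)

lemma tnat_spec (f : ℤ) : f ≤ (tnat f : ℤ) * ((tnat f : ℤ) + 1) := Nat.find_spec (tnat_exists f)

lemma tnat_le {f : ℤ} {t : ℕ} (h : f ≤ (t : ℤ) * ((t : ℤ) + 1)) : tnat f ≤ t :=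
  Nat.find_min' _ h

lemma tnat_mono {f g : ℤ} (h : f ≤ g) : tnat f ≤ tnat g :=
  tnat_le (h.trans (tnat_spec g))

lemma tnat_lb {f : ℤ} {T : ℕ} (h : ((T : ℤ) - 1) * T < f) : T ≤ tnat f := by
  by_contra hc
  push_neg at hc
  have h1 := tnat_spec f
  have h2 : (tnat f : ℤ) + 1 ≤ (T : ℤ) := by exact_mod_cast hc
  have h3 : (0:ℤ) ≤ (tnat f : ℤ) := Int.natCast_nonneg _
  nlinarith

def phi (p : ℤ × ℤ) : ℤ :=
  max (2 * (tnat ((p.1 - p.2)^2 - (p.1 + p.2)) : ℤ) - |p.1 - p.2|) |p.1 - p.2|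

lemma phi_zero : phi (0, 0) = 0 := by
  have h : tnat (0 : ℤ) = 0 := Nat.le_zero.mp (tnat_le (t := 0) (by norm_num))
  simp [phi, h]

lemma phi_ge_abs (p : ℤ × ℤ) : |p.1 - p.2| ≤ phi p := le_max_right _ _

lemma step_ub (s f s' f' : ℤ)
    (h : (|s'| = |s| + 1 ∧ f' ≤ f + 2 * |s'|) ∨ (|s'| = |s| - 1 ∧ f' ≤ f)) :
    max (2 * (tnat f' : ℤ) - |s'|) |s'| ≤ max (2 * (tnat f : ℤ) - |s|) |s| + 1 := by
  have habs : (0:ℤ) ≤ |s| := abs_nonneg s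
  have habs' : (0:ℤ) ≤ |s'| := abs_nonneg s'
  have hml : 2 * (tnat f : ℤ) - |s| ≤ max (2 * (tnat f : ℤ) - |s|) |s| := le_max_left _ _
  have hmr : |s| ≤ max (2 * (tnat f : ℤ) - |s|) |s| := le_max_right _ _
  rcases h with ⟨he, hf⟩ | ⟨he, hf⟩
  · apply max_le _ (by linarith)
    rcases le_or_gt (|s|) ((tnat f : ℤ)) with hts | hts
    · have ht' : tnat f' ≤ tnat f + 1 := by
        apply tnat_le
        have hsp := tnat_spec f
        push_cast
        nlinarith
      have ht'' : (tnat f' : ℤ) ≤ (tnat f : ℤ) + 1 := by exact_mod_cast ht'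
      linarith
    · have hkey : f' ≤ (s'.natAbs : ℤ) * ((s'.natAbs : ℤ) + 1) := by
        rw [Int.natCast_natAbs]
        have hsp := tnat_spec f
        have h0 : (0:ℤ) ≤ (tnat f : ℤ) := Int.natCast_nonneg _
        nlinarith
      have ht' : tnat f' ≤ s'.natAbs := tnat_le hkey
      have ht'' : (tnat f' : ℤ) ≤ |s'| := by
        rw [← Int.natCast_natAbs] at *
        exact_mod_cast ht'
      linarith
  · have ht' : tnat f' ≤ tnat f := tnat_mono hf
    have ht'' : (tnat f' : ℤ) ≤ (tnat f : ℤ) := by exact_mod_cast ht'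
    apply max_le _ (by linarith)
    linarith

lemma phi_refl_step (p q : ℤ × ℤ)
    (hF : (q.1 - q.2)^2 - (q.1 + q.2) = (p.1 - p.2)^2 - (p.1 + p.2))
    (h1 : |q.1 - q.2| ≤ |p.1 - p.2| + 1) (h2 : |p.1 - p.2| ≤ |q.1 - q.2| + 1) :
    phi q ≤ phi p + 1 := by
  unfold phi
  rw [hF]
  have hml : 2 * (tnat ((p.1 - p.2)^2 - (p.1 + p.2)) : ℤ) - |p.1 - p.2| ≤
      max (2 * (tnat ((p.1 - p.2)^2 - (p.1 + p.2)) : ℤ) - |p.1 - p.2|) |p.1 - p.2| :=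
    le_max_left _ _
  have hmr : |p.1 - p.2| ≤
      max (2 * (tnat ((p.1 - p.2)^2 - (p.1 + p.2)) : ℤ) - |p.1 - p.2|) |p.1 - p.2| :=
    le_max_right _ _
  exact max_le (by linarith) (by linarith)

lemma phi_unit_step (p q : ℤ × ℤ)
    (h : (|q.1 - q.2| = |p.1 - p.2| + 1 ∧
            (q.1 - q.2)^2 - (q.1 + q.2) ≤ (p.1 - p.2)^2 - (p.1 + p.2) + 2 * |q.1 - q.2|) ∨
         (|q.1 - q.2| = |p.1 - p.2| - 1 ∧
            (q.1 - q.2)^2 - (q.1 + q.2) ≤ (p.1 - p.2)^2 - (p.1 + p.2))) :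
    phi q ≤ phi p + 1 :=
  step_ub _ _ _ _ h

lemma phi_step {g : (ℤ × ℤ) → (ℤ × ℤ)} (hg : g ∈ ops) (p : ℤ × ℤ) :
    phi (g p) ≤ phi p + 1 := by
  obtain ⟨x, y⟩ := p
  have hg' : g = Lp ∨ g = Lpp ∨ g = Mr ∨ g = Ml ∨ g = Mu ∨ g = Md := by
    simpa [ops] using hg
  rcases hg' with rfl | rfl | rfl | rfl | rfl | rfl
  · -- Lp : (-x+2y+1, y)
    apply phi_refl_step
    · show ((-x + 2*y + 1) - y)^2 - ((-x + 2*y + 1) + y) = (x - y)^2 - (x + y)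
      ring
    · show |(-x + 2*y + 1) - y| ≤ |x - y| + 1
      rcases abs_cases ((-x + 2*y + 1) - y) with ⟨e1, e2⟩ | ⟨e1, e2⟩ <;>
        rcases abs_cases (x - y) with ⟨g1, g2⟩ | ⟨g1, g2⟩ <;> linarith
    · show |x - y| ≤ |(-x + 2*y + 1) - y| + 1
      rcases abs_cases ((-x + 2*y + 1) - y) with ⟨e1, e2⟩ | ⟨e1, e2⟩ <;>
        rcases abs_cases (x - y) with ⟨g1, g2⟩ | ⟨g1, g2⟩ <;> linarith
  · -- Lpp : (x, 2x-y+1)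
    apply phi_refl_step
    · show (x - (2*x - y + 1))^2 - (x + (2*x - y + 1)) = (x - y)^2 - (x + y)
      ring
    · show |x - (2*x - y + 1)| ≤ |x - y| + 1
      rcases abs_cases (x - (2*x - y + 1)) with ⟨e1, e2⟩ | ⟨e1, e2⟩ <;>
        rcases abs_cases (x - y) with ⟨g1, g2⟩ | ⟨g1, g2⟩ <;> linarith
    · show |x - y| ≤ |x - (2*x - y + 1)| + 1
      rcases abs_cases (x - (2*x - y + 1)) with ⟨e1, e2⟩ | ⟨e1, e2⟩ <;>
        rcases abs_cases (x - y) with ⟨g1, g2⟩ | ⟨g1, g2⟩ <;> linarith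
  · -- Mr : (x+1, y);  s' = s+1, f' = f + 2s' - 2
    apply phi_unit_step
    show (|(x + 1) - y| = |x - y| + 1 ∧
        ((x + 1) - y)^2 - ((x + 1) + y) ≤ (x - y)^2 - (x + y) + 2 * |(x + 1) - y|) ∨
      (|(x + 1) - y| = |x - y| - 1 ∧
        ((x + 1) - y)^2 - ((x + 1) + y) ≤ (x - y)^2 - (x + y))
    have hsq : ((x + 1) - y)^2 = (x - y)^2 + 2*(x - y) + 1 := by ring
    rcases le_or_gt 0 (x - y) with hs | hs
    · left
      have e1 : |x - y| = x - y := abs_of_nonneg hs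
      have e2 : |(x + 1) - y| = (x + 1) - y := abs_of_nonneg (by linarith)
      constructor
      · linarith
      · rw [e2]; nlinarith
    · right
      have e1 : |x - y| = -(x - y) := abs_of_neg hs
      have e2 : |(x + 1) - y| = -((x + 1) - y) := abs_of_nonpos (by linarith)
      constructor
      · linarith
      · nlinarith
  · -- Ml : (x-1, y); s' = s-1, f' = f - 2s'
    apply phi_unit_step
    show (|(x - 1) - y| = |x - y| + 1 ∧
        ((x - 1) - y)^2 - ((x - 1) + y) ≤ (x - y)^2 - (x + y) + 2 * |(x - 1) - y|) ∨
      (|(x - 1) - y| = |x - y| - 1 ∧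
        ((x - 1) - y)^2 - ((x - 1) + y) ≤ (x - y)^2 - (x + y))
    have hsq : ((x - 1) - y)^2 = (x - y)^2 - 2*(x - y) + 1 := by ring
    rcases le_or_gt 1 (x - y) with hs | hs
    · right
      have e1 : |x - y| = x - y := abs_of_nonneg (by linarith)
      have e2 : |(x - 1) - y| = (x - 1) - y := abs_of_nonneg (by linarith)
      exact ⟨by linarith, by nlinarith⟩
    · left
      have e1 : |x - y| = -(x - y) := abs_of_nonpos (by linarith)
      have e2 : |(x - 1) - y| = -((x - 1) - y) := abs_of_nonpos (by linarith)
      exact ⟨by linarith, by nlinarith⟩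
  · -- Mu : (x, y+1); s' = s-1, f' = f - 2s
    apply phi_unit_step
    show (|x - (y + 1)| = |x - y| + 1 ∧
        (x - (y + 1))^2 - (x + (y + 1)) ≤ (x - y)^2 - (x + y) + 2 * |x - (y + 1)|) ∨
      (|x - (y + 1)| = |x - y| - 1 ∧
        (x - (y + 1))^2 - (x + (y + 1)) ≤ (x - y)^2 - (x + y))
    have hsq : (x - (y + 1))^2 = (x - y)^2 - 2*(x - y) + 1 := by ring
    rcases le_or_gt 1 (x - y) with hs | hs
    · right
      have e1 : |x - y| = x - y := abs_of_nonneg (by linarith)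
      have e2 : |x - (y + 1)| = x - (y + 1) := abs_of_nonneg (by linarith)
      exact ⟨by linarith, by nlinarith⟩
    · left
      have e1 : |x - y| = -(x - y) := abs_of_nonpos (by linarith)
      have e2 : |x - (y + 1)| = -(x - (y + 1)) := abs_of_nonpos (by linarith)
      exact ⟨by linarith, by nlinarith⟩
  · -- Md : (x, y-1); s' = s+1, f' = f + 2s'
    apply phi_unit_step
    show (|x - (y - 1)| = |x - y| + 1 ∧
        (x - (y - 1))^2 - (x + (y - 1)) ≤ (x - y)^2 - (x + y) + 2 * |x - (y - 1)|) ∨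
      (|x - (y - 1)| = |x - y| - 1 ∧
        (x - (y - 1))^2 - (x + (y - 1)) ≤ (x - y)^2 - (x + y))
    have hsq : (x - (y - 1))^2 = (x - y)^2 + 2*(x - y) + 1 := by ring
    rcases le_or_gt 0 (x - y) with hs | hs
    · left
      have e1 : |x - y| = x - y := abs_of_nonneg hs
      have e2 : |x - (y - 1)| = x - (y - 1) := abs_of_nonneg (by linarith)
      exact ⟨by linarith, by nlinarith⟩
    · right
      have e1 : |x - y| = -(x - y) := abs_of_neg hs
      have e2 : |x - (y - 1)| = -(x - (y - 1)) := abs_of_nonpos (by linarith)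
      exact ⟨by linarith, by nlinarith⟩

lemma phi_zero' : phi (0 : ℤ × ℤ) = 0 := phi_zero

lemma phi_foldr (l : List ((ℤ × ℤ) → (ℤ × ℤ))) (h : ∀ f ∈ l, f ∈ ops) :
    phi (l.foldr (fun f p => f p) (0, 0)) ≤ (l.length : ℤ) := by
  induction l with
  | nil => norm_num [phi_zero', phi_zero]
  | cons g l ih =>
    have h1 : phi (l.foldr (fun f p => f p) (0, 0)) ≤ (l.length : ℤ) :=
      ih (fun f hf => h f (List.mem_cons_of_mem _ hf))
    have h2 := phi_step (h g List.mem_cons_self) (l.foldr (fun f p => f p) (0, 0))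
    simp only [List.foldr_cons, List.length_cons]
    push_cast
    linarith

lemma dpc_le (q : ℤ × ℤ) (l : List ((ℤ × ℤ) → (ℤ × ℤ))) (hops : ∀ f ∈ l, f ∈ ops)
    (hf : l.foldr (fun f p => f p) ((0 : ℤ), (0 : ℤ)) = q) : dpc (0, 0) q ≤ l.length :=
  Nat.sInf_le ⟨l, rfl, hops, hf⟩

lemma dpc_ge (q : ℤ × ℤ)
    (hne : {n : ℕ | ∃ l : List ((ℤ × ℤ) → (ℤ × ℤ)), l.length = n ∧ (∀ f ∈ l, f ∈ ops) ∧
      l.foldr (fun f p => f p) ((0 : ℤ), (0 : ℤ)) = q}.Nonempty) :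
    phi q ≤ (dpc (0, 0) q : ℤ) := by
  obtain ⟨l, hlen, hops, hfold⟩ := Nat.sInf_mem hne
  have := phi_foldr l hops
  rw [hfold] at this
  unfold dpc
  rw [← hlen] at *
  exact this

-- words
lemma replicate_ops {g : (ℤ × ℤ) → (ℤ × ℤ)} (hg : g ∈ ops) (a : ℕ) :
    ∀ f ∈ List.replicate a g, f ∈ ops := fun f hf => (List.eq_of_mem_replicate hf) ▸ hg

lemma Lp_mem : Lp ∈ ops := by simp [ops]
lemma Lpp_mem : Lpp ∈ ops := by simp [ops]
lemma Mr_mem : Mr ∈ ops := by simp [ops]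
lemma Ml_mem : Ml ∈ ops := by simp [ops]
lemma Mu_mem : Mu ∈ ops := by simp [ops]
lemma Md_mem : Md ∈ ops := by simp [ops]

lemma ml_foldr (a : ℕ) (p : ℤ × ℤ) :
    (List.replicate a Ml).foldr (fun f p => f p) p = (p.1 - a, p.2) := by
  induction a with
  | zero => simp
  | succ a ih =>
    rw [List.replicate_succ]
    simp only [List.foldr_cons, ih, Ml]
    push_cast
    exact Prod.ext (by ring) rfl

lemma mr_foldr (a : ℕ) (p : ℤ × ℤ) :
    (List.replicate a Mr).foldr (fun f p => f p) p = (p.1 + a, p.2) := by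
  induction a with
  | zero => simp
  | succ a ih =>
    rw [List.replicate_succ]
    simp only [List.foldr_cons, ih, Mr]
    push_cast
    exact Prod.ext (by ring) rfl

lemma mu_foldr (a : ℕ) (p : ℤ × ℤ) :
    (List.replicate a Mu).foldr (fun f p => f p) p = (p.1, p.2 + a) := by
  induction a with
  | zero => simp
  | succ a ih =>
    rw [List.replicate_succ]
    simp only [List.foldr_cons, ih, Mu]
    push_cast
    exact Prod.ext rfl (by ring)

lemma md_foldr (a : ℕ) (p : ℤ × ℤ) :
    (List.replicate a Md).foldr (fun f p => f p) p = (p.1, p.2 - a) := by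
  induction a with
  | zero => simp
  | succ a ih =>
    rw [List.replicate_succ]
    simp only [List.foldr_cons, ih, Md]
    push_cast
    exact Prod.ext rfl (by ring)

def pairWord : ℕ → List ((ℤ × ℤ) → (ℤ × ℤ))
  | 0 => []
  | (j+1) => Lp :: Lpp :: pairWord j

lemma pairWord_length (j : ℕ) : (pairWord j).length = 2 * j := by
  induction j with
  | zero => rfl
  | succ j ih => simp [pairWord, ih]; ring

lemma pairWord_ops (j : ℕ) : ∀ f ∈ pairWord j, f ∈ ops := by
  induction j with
  | zero => simp [pairWord]
  | succ j ih =>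
    intro f hf
    rcases hf with _ | ⟨_, hf⟩
    · exact Lp_mem
    · rcases hf with _ | ⟨_, hf⟩
      · exact Lpp_mem
      · exact ih f hf

lemma pairWord_foldr (j : ℕ) (p : ℤ × ℤ) :
    (pairWord j).foldr (fun f p => f p) p =
      (2*(j:ℤ)^2 + j + (2*j+1)*p.1 - 2*j*p.2, 2*(j:ℤ)^2 - j + 2*j*p.1 - (2*j-1)*p.2) := by
  induction j with
  | zero => simp [pairWord]
  | succ j ih =>
    show (Lp :: Lpp :: pairWord j).foldr (fun f p => f p) p = _
    simp only [List.foldr_cons, ih, Lp, Lpp]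
    push_cast
    exact Prod.ext (by ring) (by ring)

lemma block_word (x c : ℤ) (m : ℕ) (hx : x < 0) (hc : 0 < c)
    (h1 : 2*(m:ℤ)*c + (m:ℤ)*((m:ℤ)-1) < -(2*x))
    (h2 : -(2*x) ≤ 2*((m:ℤ)+1)*c + (m:ℤ)*((m:ℤ)+1)) :
    ∃ l : List ((ℤ × ℤ) → (ℤ × ℤ)), (∀ f ∈ l, f ∈ ops) ∧
      ((l.length : ℤ) = c + 2*(m:ℤ)) ∧ l.foldr (fun f p => f p) (0, 0) = (x, x + c) := by
  rcases Nat.even_or_odd m with ⟨j, hj⟩ | ⟨j, hj⟩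
  · -- m = j + j
    have hm : (m:ℤ) = (j:ℤ) + (j:ℤ) := by exact_mod_cast congrArg (Nat.cast : ℕ → ℤ) hj
    have hX0 : x + (m:ℤ)*c + (j:ℤ)*(2*(j:ℤ)-1) ≤ -1 := by nlinarith [hm]
    have hY0 : 0 ≤ (x + (m:ℤ)*c + (j:ℤ)*(2*(j:ℤ)-1)) + c + (m:ℤ) := by nlinarith [hm]
    set X0 : ℤ := x + (m:ℤ)*c + (j:ℤ)*(2*(j:ℤ)-1) with hX0def
    have ha : ((-X0).toNat : ℤ) = -X0 := Int.toNat_of_nonneg (by linarith)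
    have hb : (((X0 + c + (m:ℤ)).toNat : ℤ)) = X0 + c + (m:ℤ) := Int.toNat_of_nonneg hY0
    refine ⟨pairWord j ++ (List.replicate (X0 + c + (m:ℤ)).toNat Mu ++
        List.replicate (-X0).toNat Ml), ?_, ?_, ?_⟩
    · intro f hf
      rcases List.mem_append.mp hf with hf | hf
      · exact pairWord_ops j f hf
      · rcases List.mem_append.mp hf with hf | hf
        · exact replicate_ops Mu_mem _ f hf
        · exact replicate_ops Ml_mem _ f hf
    · simp only [List.length_append, List.length_replicate, pairWord_length]
      push_cast
      rw [ha, hb]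
      rw [hm] at *
      ring_nf
    · rw [List.foldr_append, List.foldr_append, ml_foldr, mu_foldr, pairWord_foldr]
      simp only [Prod.mk.injEq]
      constructor
      · rw [ha, hb, hX0def, hm]; ring
      · rw [ha, hb, hX0def, hm]; ring
  · -- m = 2*j + 1
    have hm : (m:ℤ) = 2*(j:ℤ) + 1 := by exact_mod_cast congrArg (Nat.cast : ℕ → ℤ) hj
    have hX0 : 0 ≤ x + ((m:ℤ)+1)*c + ((j:ℤ)+1)*(2*(j:ℤ)+1) := by nlinarith [hm]
    have hB0 : 1 ≤ c + (m:ℤ) - (x + ((m:ℤ)+1)*c + ((j:ℤ)+1)*(2*(j:ℤ)+1)) := by nlinarith [hm]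
    set X0 : ℤ := x + ((m:ℤ)+1)*c + ((j:ℤ)+1)*(2*(j:ℤ)+1) with hX0def
    have ha : ((X0.toNat : ℤ)) = X0 := Int.toNat_of_nonneg hX0
    have hb : (((c + (m:ℤ) - X0).toNat : ℤ)) = c + (m:ℤ) - X0 := Int.toNat_of_nonneg (by linarith)
    refine ⟨pairWord j ++ (Lp :: (List.replicate (c + (m:ℤ) - X0).toNat Md ++
        List.replicate X0.toNat Mr)), ?_, ?_, ?_⟩
    · intro f hf
      rcases List.mem_append.mp hf with hf | hf
      · exact pairWord_ops j f hf
      · rcases hf with _ | ⟨_, hf⟩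
        · exact Lp_mem
        · rcases List.mem_append.mp hf with hf | hf
          · exact replicate_ops Md_mem _ f hf
          · exact replicate_ops Mr_mem _ f hf
    · simp only [List.length_append, List.length_cons, List.length_replicate, pairWord_length]
      push_cast
      rw [ha, hb]
      rw [hm] at *
      ring_nf
    · rw [List.foldr_append]
      simp only [List.foldr_cons]
      rw [List.foldr_append, mr_foldr, md_foldr]
      show (pairWord j).foldr (fun f p => f p) (Lp _) = _
      simp only [Lp]
      rw [pairWord_foldr]
      simp only [Prod.mk.injEq]
      constructor
      · rw [ha, hb, hX0def, hm]; ring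
      · rw [ha, hb, hX0def, hm]; ring

lemma phi_block (x c : ℤ) (m : ℕ) (hc : 0 < c)
    (h1 : 2*(m:ℤ)*c + (m:ℤ)*((m:ℤ)-1) < -(2*x))
    (h2 : -(2*x) ≤ 2*((m:ℤ)+1)*c + (m:ℤ)*((m:ℤ)+1)) :
    phi (x, x + c) = c + 2*(m:ℤ) := by
  have hm0' : (0:ℤ) ≤ (m:ℤ) := Int.natCast_nonneg _
  have hT : (((c + (m:ℤ)).toNat : ℤ)) = c + (m:ℤ) :=
    Int.toNat_of_nonneg (by linarith)
  have hs : |x - (x + c)| = c := by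
    rw [show x - (x + c) = -c by ring, abs_neg, abs_of_pos hc]
  have hF : (x - (x + c))^2 - (x + (x + c)) = c^2 - 2*x - c := by ring
  have htn : tnat ((x - (x + c))^2 - (x + (x + c))) = (c + (m:ℤ)).toNat := by
    rw [hF]
    apply le_antisymm
    · apply tnat_le
      rw [hT]
      have : (0:ℤ) ≤ (m:ℤ) := Int.natCast_nonneg _
      nlinarith
    · apply tnat_lb
      rw [hT]
      have : (0:ℤ) ≤ (m:ℤ) := Int.natCast_nonneg _
      nlinarith
  unfold phi
  simp only []
  rw [htn, hs, hT]
  have : (0:ℤ) ≤ (m:ℤ) := Int.natCast_nonneg _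
  rw [max_eq_left (by linarith)]
  ring

lemma phi_low (x c : ℤ) (m : ℕ) (hc : 0 < c)
    (h1 : 2*(m:ℤ)*c + (m:ℤ)*((m:ℤ)-1) < -(2*x)) :
    c + 2*(m:ℤ) ≤ phi (x, x + c) := by
  have hm0 : (0:ℤ) ≤ (m:ℤ) := Int.natCast_nonneg _
  have hT : (((c + (m:ℤ)).toNat : ℤ)) = c + (m:ℤ) := Int.toNat_of_nonneg (by linarith)
  have hs : |x - (x + c)| = c := by
    rw [show x - (x + c) = -c by ring, abs_neg, abs_of_pos hc]
  have hF : (x - (x + c))^2 - (x + (x + c)) = c^2 - 2*x - c := by ring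
  have htn : (c + (m:ℤ)).toNat ≤ tnat ((x - (x + c))^2 - (x + (x + c))) := by
    rw [hF]
    apply tnat_lb
    rw [hT]
    nlinarith
  have htn' : c + (m:ℤ) ≤ (tnat ((x - (x + c))^2 - (x + (x + c))) : ℤ) := by
    rw [← hT]; exact_mod_cast htn
  have := le_max_left (2 * (tnat ((x - (x + c))^2 - (x + (x + c))) : ℤ) - |x - (x + c)|)
    |x - (x + c)|
  unfold phi
  simp only []
  rw [hs] at *
  linarith

lemma dpc_block (x c : ℤ) (m : ℕ) (hx : x < 0) (hc : 0 < c)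
    (h1 : 2*(m:ℤ)*c + (m:ℤ)*((m:ℤ)-1) < -(2*x))
    (h2 : -(2*x) ≤ 2*((m:ℤ)+1)*c + (m:ℤ)*((m:ℤ)+1)) :
    ((dpc (0, 0) (x, x + c)) : ℤ) = c + 2*(m:ℤ) := by
  obtain ⟨l, hops, hlen, hfold⟩ := block_word x c m hx hc h1 h2
  have hub : dpc (0, 0) (x, x + c) ≤ l.length := dpc_le _ l hops hfold
  have hne : {n : ℕ | ∃ l : List ((ℤ × ℤ) → (ℤ × ℤ)), l.length = n ∧ (∀ f ∈ l, f ∈ ops) ∧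
      l.foldr (fun f p => f p) ((0 : ℤ), (0 : ℤ)) = (x, x + c)}.Nonempty :=
    ⟨l.length, l, rfl, hops, hfold⟩
  have hlb := dpc_ge _ hne
  rw [phi_block x c m hc h1 h2] at hlb
  have hub' : ((dpc (0, 0) (x, x + c)) : ℤ) ≤ c + 2*(m:ℤ) := by
    rw [← hlen]; exact_mod_cast hub
  linarith

lemma level_set (r c k q1 q2 : ℤ) (hr : 2 ≤ r) (hc0 : 0 < c) (hk1 : 1 ≤ k)
    (hrk : r = c + 2*k) (hq1 : 2*q1 = k*(k+1)) (hq2 : 2*q2 = k*(k-1)) :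
    {x : ℤ | x < 0 ∧ ((dpc (0, 0) (x, x + c)) : ℤ) = r} =
      Set.Icc (-((k+1)*c) - q1) (-(k*c) - q2 - 1) := by
  have hq2nn : 0 ≤ q2 := by nlinarith
  have hkc : 1 ≤ k*c := by nlinarith
  ext x
  simp only [Set.mem_setOf_eq, Set.mem_Icc]
  constructor
  · rintro ⟨hx, hd⟩
    constructor
    · by_contra hlt
      push_neg at hlt
      have hxA : x ≤ -((k+1)*c) - q1 - 1 := by linarith
      obtain ⟨K, hK⟩ : ∃ K : ℕ, (K:ℤ) = k + 1 := ⟨(k+1).toNat, Int.toNat_of_nonneg (by linarith)⟩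
      have h1 : 2*(K:ℤ)*c + (K:ℤ)*((K:ℤ)-1) < -(2*x) := by rw [hK]; nlinarith
      by_cases hne : {n : ℕ | ∃ l : List ((ℤ × ℤ) → (ℤ × ℤ)), l.length = n ∧ (∀ f ∈ l, f ∈ ops) ∧
          l.foldr (fun f p => f p) ((0 : ℤ), (0 : ℤ)) = (x, x + c)}.Nonempty
      · have hge := dpc_ge _ hne
        have hlow := phi_low x c K hc0 h1
        rw [hK] at hlow
        rw [hd] at hge
        linarith
      · have h0 : dpc (0, 0) (x, x + c) = 0 := by
          unfold dpc
          rw [Set.not_nonempty_iff_eq_empty.mp hne]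
          exact Nat.sInf_empty
        rw [h0] at hd
        norm_num at hd
        linarith
    · by_contra hgt
      push_neg at hgt
      have hxB : -(k*c) - q2 ≤ x := by linarith
      obtain ⟨K, hK⟩ : ∃ K : ℕ, (K:ℤ) = k := ⟨k.toNat, Int.toNat_of_nonneg (by linarith)⟩
      have hK1 : 1 ≤ K := by
        by_contra h
        push_neg at h
        interval_cases K
        · simp at hK; omega
      have hcast : ((K - 1 : ℕ):ℤ) = k - 1 := by rw [Nat.cast_sub hK1, hK]; norm_num
      have hPK : -(2*x) ≤ 2*(((K-1:ℕ):ℤ)+1)*c + ((K-1:ℕ):ℤ)*(((K-1:ℕ):ℤ)+1) := by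
        rw [hcast]; nlinarith
      have hex : ∃ m : ℕ, -(2*x) ≤ 2*((m:ℤ)+1)*c + (m:ℤ)*((m:ℤ)+1) := ⟨K-1, hPK⟩
      have hspec := Nat.find_spec hex
      have hmle : Nat.find hex ≤ K - 1 := Nat.find_min' hex hPK
      set m0 := Nat.find hex with hm0
      have h1 : 2*(m0:ℤ)*c + (m0:ℤ)*((m0:ℤ)-1) < -(2*x) := by
        rcases Nat.eq_zero_or_pos m0 with hz | hz
        · rw [hz]; push_cast; linarith
        · have hmin := Nat.find_min hex (show m0 - 1 < m0 from Nat.sub_lt hz one_pos)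
          push_neg at hmin
          have hc2 : ((m0 - 1 : ℕ):ℤ) = (m0:ℤ) - 1 := by
            rw [Nat.cast_sub hz]; norm_num
          rw [hc2] at hmin
          nlinarith
      have hval := dpc_block x c m0 hx hc0 h1 hspec
      rw [hd] at hval
      have hmle' : (m0:ℤ) ≤ k - 1 := by
        have := (Nat.cast_le (α := ℤ)).mpr hmle
        rwa [hcast] at this
      linarith
  · rintro ⟨hA, hB⟩
    have hx : x < 0 := by linarith
    refine ⟨hx, ?_⟩
    obtain ⟨K, hK⟩ : ∃ K : ℕ, (K:ℤ) = k := ⟨k.toNat, Int.toNat_of_nonneg (by linarith)⟩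
    have h1 : 2*(K:ℤ)*c + (K:ℤ)*((K:ℤ)-1) < -(2*x) := by rw [hK]; nlinarith
    have h2 : -(2*x) ≤ 2*((K:ℤ)+1)*c + (K:ℤ)*((K:ℤ)+1) := by rw [hK]; nlinarith
    rw [dpc_block x c K hx hc0 h1 h2, hK]
    linarith

theorem neg_part_of_boundary_lines_pos_c (r c k : ℤ) (hr : 2 ≤ r)
    (hpar : c % 2 = r % 2) (hc0 : 0 < c) (hcl : c ≤ r - 2) (hk : c = r - 2 * k) :
    (Odd k →
      {x : ℤ | x < 0 ∧ (dpc (0, 0) (x, x + c) : ℤ) = r} =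
        (fun x => x + (-(c * (k + 1)) - (k + 1) * k / 2)) '' Set.Icc 0 (r - k - 1)) ∧
    (Even k →
      {x : ℤ | x < 0 ∧ (dpc (0, 0) (x, x + c) : ℤ) = r} =
        (fun x => x + (-(c * k) - k * (k - 1) / 2)) '' Set.Icc (k - r) (-1)) := by
  have hk1 : 1 ≤ k := by linarith
  have hrk : r = c + 2*k := by linarith
  obtain ⟨t1, ht1⟩ := Int.even_mul_succ_self k
  obtain ⟨t2, ht2⟩ := Int.even_mul_succ_self (k - 1)
  have ht1' : k*(k+1) = 2*t1 := by rw [ht1]; ring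
  have ht2' : k*(k-1) = 2*t2 := by
    rw [show k*(k-1) = (k-1)*((k-1)+1) from by ring, ht2]; ring
  have hkk2 : k*(k+1) = k*(k-1) + 2*k := by ring
  have hmain := level_set r c k t1 t2 hr hc0 hk1 hrk (by linarith) (by linarith)
  constructor
  · intro _
    rw [hmain]
    have hdiv1 : (k+1)*k/2 = t1 := by
      rw [show (k+1)*k = 2*t1 from by rw [← ht1']; ring]
      omega
    rw [hdiv1, Set.image_add_const_Icc]
    have e1 : (0:ℤ) + (-(c*(k+1)) - t1) = -((k+1)*c) - t1 := by ring
    have e2 : (r - k - 1) + (-(c*(k+1)) - t1) = -(k*c) - t2 - 1 := by linarith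
    rw [e1, e2]
  · intro _
    rw [hmain]
    have hdiv2 : k*(k-1)/2 = t2 := by
      rw [ht2']
      omega
    rw [hdiv2, Set.image_add_const_Icc]
    have e1 : (k - r) + (-(c*k) - t2) = -((k+1)*c) - t1 := by linarith
    have e2 : (-1:ℤ) + (-(c*k) - t2) = -(k*c) - t2 - 1 := by ring
    rw [e1, e2]
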